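/- Let N ≥ 1 be an integer, μ : {1,…,N} → ℝ with 0 ≤ μ(n) ≤ μ̄ = max_m μ(m) for all n, let k = 1/μ̄ with k > 1 and k ∉ ℤ, p = Σ_n μ(n), r = kp with r ∉ ℤ. Let α, β, δ satisfy ⌊k⌋(⌈k⌉−k)/k ≤ α < 1, 0 ≤ β ≤ 1, 0 ≤ δ ≤ 1, β ≥ max(1 − (⌊k⌋/(kα))(r−⌊r⌋), 0), δ ≥ max(1 − (⌈k⌉/(k(1−α)))(r−⌊r⌋), 0), and α(⌈r⌉−β)/⌊k⌋ + (1−α)(⌈r⌉−δ)/⌈k⌉ = p. Define m(n) = max(μ(n) − (1−α)/⌈k⌉, 0), h(n) = max(μ(n) − α/⌊k⌋, 0), γ = ( (α/⌊k⌋)(⌈r⌉−β) − Σ_n m(n) ) / ( p − Σ_n m(n) − Σ_n h(n) ), μ̂(n) = m(n) + (μ(n)−m(n)−h(n))γ and μ̄ᵛ(n) = h(n) + (μ(n)−m(n)−h(n))(1−γ); then define m̂(n) = max(μ̂(n) − α(1−β)/⌊k⌋, 0), ĥ(n) = max(μ̂(n) − αβ/⌊k⌋, 0), γ̂ = ( (αβ/⌊k⌋)⌊r⌋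 − Σ_n m̂(n) ) / ( (α/⌊k⌋)(⌈r⌉−β) − Σ_n m̂(n) − Σ_n ĥ(n) ), and μ̂₁(n) = m̂(n) + (μ̂(n)−m̂(n)−ĥ(n))γ̂, μ̂₂(n) = μ̂(n) − μ̂₁(n) if 0 < β < 1, while μ̂₁(n) = μ̂(n)β, μ̂₂(n) = μ̂(n)(1−β) if β ∈ {0,1}; analogously define m̄(n) = max(μ̄ᵛ(n) − (1−α)(1−δ)/⌈k⌉, 0), h̄(n) = max(μ̄ᵛ(n) − (1−α)δ/⌈k⌉, 0), γ̄ = ( ((1−α)δ/⌈k⌉)⌊r⌋ − Σ_n m̄(n) ) / ( ((1−α)/⌈k⌉)(⌈r⌉−δ) − Σ_n m̄(n) − Σ_n h̄(n) ), and μ̄₁(n) = m̄(n) + (μ̄ᵛ(n)−m̄(n)−h̄(n))γ̄, μ̄₂(n) = μ̄ᵛ(n) − μ̄₁(n) if 0 < δ < 1, while μ̄₁(n) = μ̄ᵛ(n)δ, μ̄₂(n) = μ̄ᵛ(n)(1−δ) if δ ∈ {0,1} (all appearing denominators assumed nonzero). Then for every n: μ̂₁(n) + μ̂₂(n) + μ̄₁(n)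 + μ̄₂(n) = μ(n), 0 ≤ μ̂₁(n) ≤ αβ/⌊k⌋, 0 ≤ μ̂₂(n) ≤ α(1−β)/⌊k⌋, 0 ≤ μ̄₁(n) ≤ (1−α)δ/⌈k⌉, 0 ≤ μ̄₂(n) ≤ (1−α)(1−δ)/⌈k⌉; and the totals satisfy Σ_n μ̂₁(n) = αβ⌊r⌋/⌊k⌋, Σ_n μ̂₂(n) = α(1−β)⌈r⌉/⌊k⌋, Σ_n μ̄₁(n) = (1−α)δ⌊r⌋/⌈k⌉ and Σ_n μ̄₂(n) = (1−α)(1−δ)⌈r⌉/⌈k⌉. -/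

import Mathlib

open Finset


lemma clip_sum {N : ℕ} (x : Fin N → ℝ) (c aa : ℝ)
    (hx : ∀ n, 0 ≤ x n ∧ x n ≤ c) (ha : 0 ≤ aa) (M : ℕ) :
    (∑ n, max (x n - aa) 0) ≤
      (M : ℝ) * max (c - aa) 0 + max ((∑ n, x n) - (M : ℝ) * c - aa) 0 := by
  classical
  set S : Finset (Fin N) := Finset.univ.filter (fun n => aa < x n) with hSdef
  have hsplit : (∑ n, max (x n - aa) 0) = ∑ n ∈ S, (x n - aa) := by
    rw [hSdef, Finset.sum_filter]
    refine Finset.sum_congr rfl fun n _ => ?_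
    split_ifs with hn
    · exact max_eq_left (by linarith)
    · push_neg at hn; exact max_eq_right (by linarith)
  rcases le_or_gt S.card M with hcard | hcard
  · have h1 : ∑ n ∈ S, (x n - aa) ≤ ∑ n ∈ S, max (c - aa) 0 := by
      refine Finset.sum_le_sum fun n _ => ?_
      exact le_trans (by linarith [(hx n).2]) (le_max_left (c - aa) 0)
    rw [Finset.sum_const, nsmul_eq_mul] at h1
    have h2 : (S.card : ℝ) * max (c - aa) 0 ≤ (M:ℝ) * max (c - aa) 0 := by
      apply mul_le_mul_of_nonneg_right _ (le_max_right _ _)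
      exact_mod_cast hcard
    have h3 : (0:ℝ) ≤ max ((∑ n, x n) - (M:ℝ)*c - aa) 0 := le_max_right _ _
    linarith
  · have h1 : ∑ n ∈ S, (x n - aa) = (∑ n ∈ S, x n) - (S.card : ℝ) * aa := by
      rw [Finset.sum_sub_distrib, Finset.sum_const, nsmul_eq_mul]
    have h2 : ∑ n ∈ S, x n ≤ ∑ n, x n := by
      refine Finset.sum_le_sum_of_subset_of_nonneg (Finset.subset_univ S) ?_
      intro n _ _; exact (hx n).1
    have h3 : ((M:ℝ)+1) * aa ≤ (S.card:ℝ) * aa := by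
      apply mul_le_mul_of_nonneg_right _ ha
      have : (M+1 : ℕ) ≤ S.card := hcard
      exact_mod_cast this
    have h4 : (M:ℝ) * (c - aa) ≤ (M:ℝ) * max (c - aa) 0 :=
      mul_le_mul_of_nonneg_left (le_max_left _ _) (Nat.cast_nonneg M)
    have h5 : (∑ n, x n) - (M:ℝ)*c - aa ≤ max ((∑ n, x n) - (M:ℝ)*c - aa) 0 :=
      le_max_left _ _
    linarith

lemma split_core {N : ℕ} (x m h y z : Fin N → ℝ) (c1 c2 T γ : ℝ)
    (hc1 : 0 ≤ c1) (hc2 : 0 ≤ c2)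
    (hx : ∀ n, 0 ≤ x n ∧ x n ≤ c1 + c2)
    (hm : ∀ n, m n = max (x n - c2) 0) (hh : ∀ n, h n = max (x n - c1) 0)
    (hD : (∑ n, x n) - (∑ n, m n) - (∑ n, h n) ≠ 0)
    (hγ : γ = (T - ∑ n, m n) / ((∑ n, x n) - (∑ n, m n) - (∑ n, h n)))
    (hT1 : (∑ n, m n) ≤ T) (hT2 : (∑ n, h n) ≤ (∑ n, x n) - T)
    (hy : ∀ n, y n = m n + (x n - m n - h n) * γ)
    (hz : ∀ n, z n = x n - y n) :
    (∀ n, 0 ≤ y n ∧ y n ≤ c1) ∧ (∀ n, 0 ≤ z n ∧ z n ≤ c2) ∧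
      (∑ n, y n) = T ∧ (∑ n, z n) = (∑ n, x n) - T := by
  have hw : ∀ n, 0 ≤ x n - m n - h n := by
    intro n
    rcases hx n with ⟨h0, h1⟩
    rcases max_cases (x n - c2) 0 with ⟨e1, _⟩ | ⟨e1, _⟩ <;>
      rcases max_cases (x n - c1) 0 with ⟨e2, _⟩ | ⟨e2, _⟩ <;>
      rw [hm n, hh n, e1, e2] <;> linarith
  have hm0 : ∀ n, 0 ≤ m n := fun n => (hm n) ▸ le_max_right _ _
  have hh0 : ∀ n, 0 ≤ h n := fun n => (hh n) ▸ le_max_right _ _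
  have hxh : ∀ n, x n - h n ≤ c1 := by
    intro n; rw [hh n]; have := le_max_left (x n - c1) 0; linarith
  have hxm : ∀ n, x n - m n ≤ c2 := by
    intro n; rw [hm n]; have := le_max_left (x n - c2) 0; linarith
  have hsumw : (∑ n, x n) - (∑ n, m n) - (∑ n, h n) = ∑ n, (x n - m n - h n) := by
    rw [Finset.sum_sub_distrib, Finset.sum_sub_distrib]
  have hD0 : 0 < (∑ n, x n) - (∑ n, m n) - (∑ n, h n) := by
    have hge : 0 ≤ (∑ n, x n) - (∑ n, m n) - (∑ n, h n) := by
      rw [hsumw]; exact Finset.sum_nonneg fun n _ => hw n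
    rcases lt_or_eq_of_le hge with hlt | heq
    · exact hlt
    · exact absurd heq.symm hD
  have hγ0 : 0 ≤ γ := by
    rw [hγ]; exact div_nonneg (by linarith) hD0.le
  have hγ1 : γ ≤ 1 := by
    rw [hγ, div_le_one hD0]; linarith
  have hyb : ∀ n, 0 ≤ y n ∧ y n ≤ c1 := by
    intro n
    constructor
    · rw [hy n]; have := mul_nonneg (hw n) hγ0; linarith [hm0 n]
    · rw [hy n]
      have := mul_le_of_le_one_right (hw n) hγ1
      linarith [hxh n]
  have hzb : ∀ n, 0 ≤ z n ∧ z n ≤ c2 := by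
    intro n
    rcases hyb n with ⟨hy0, hy1'⟩
    constructor
    · rw [hz n, hy n]
      have := mul_le_of_le_one_right (hw n) hγ1
      linarith [hh0 n]
    · rw [hz n, hy n]
      have := mul_nonneg (hw n) hγ0
      linarith [hxm n]
  have hsy : (∑ n, y n) = T := by
    have e : (∑ n, y n) = (∑ n, m n) + (∑ n, (x n - m n - h n)) * γ := by
      simp only [hy]
      rw [Finset.sum_add_distrib, ← Finset.sum_mul]
    rw [e, ← hsumw, hγ]
    field_simp
    ring
  refine ⟨hyb, hzb, hsy, ?_⟩
  have : (∑ n, z n) = ∑ n, (x n - y n) := Finset.sum_congr rfl fun n _ => hz n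
  rw [this, Finset.sum_sub_distrib, hsy]

lemma level2 {N : ℕ} (x x1 x2 mm hh : Fin N → ℝ) (c β γ' : ℝ) (M : ℕ)
    (hc : 0 ≤ c) (hβ0 : 0 ≤ β) (hβ1 : β ≤ 1)
    (hx : ∀ n, 0 ≤ x n ∧ x n ≤ c)
    (hsum : (∑ n, x n) = c * ((M:ℝ) + 1 - β))
    (hmm : ∀ n, mm n = max (x n - c * (1 - β)) 0)
    (hhh : ∀ n, hh n = max (x n - c * β) 0)
    (hγ' : γ' = (c * β * (M:ℝ) - ∑ n, mm n) / ((∑ n, x n) - (∑ n, mm n) - ∑ n, hh n))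
    (hmid : 0 < β → β < 1 → ((∑ n, x n) - (∑ n, mm n) - (∑ n, hh n) ≠ 0 ∧
        ∀ n, x1 n = mm n + (x n - mm n - hh n) * γ' ∧ x2 n = x n - x1 n))
    (hend : (β = 0 ∨ β = 1) → ∀ n, x1 n = x n * β ∧ x2 n = x n * (1 - β)) :
    (∀ n, x1 n + x2 n = x n) ∧ (∀ n, 0 ≤ x1 n ∧ x1 n ≤ c * β) ∧
      (∀ n, 0 ≤ x2 n ∧ x2 n ≤ c * (1 - β)) ∧
      (∑ n, x1 n) = c * β * (M:ℝ) ∧ (∑ n, x2 n) = c * (1 - β) * ((M:ℝ) + 1) := by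
  by_cases hE : β = 0 ∨ β = 1
  · have hd := hend hE
    have hprod : β * (1 - β) = 0 := by rcases hE with h | h <;> rw [h] <;> ring
    have hadd : ∀ n, x1 n + x2 n = x n := by
      intro n; rw [(hd n).1, (hd n).2]; ring
    have hb1 : ∀ n, 0 ≤ x1 n ∧ x1 n ≤ c * β := by
      intro n; rw [(hd n).1]
      exact ⟨mul_nonneg (hx n).1 hβ0, mul_le_mul_of_nonneg_right (hx n).2 hβ0⟩
    have hb2 : ∀ n, 0 ≤ x2 n ∧ x2 n ≤ c * (1 - β) := by
      intro n; rw [(hd n).2]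
      exact ⟨mul_nonneg (hx n).1 (by linarith), mul_le_mul_of_nonneg_right (hx n).2 (by linarith)⟩
    have hs1 : (∑ n, x1 n) = c * β * (M:ℝ) := by
      have : (∑ n, x1 n) = (∑ n, x n) * β := by
        rw [Finset.sum_mul]; exact Finset.sum_congr rfl fun n _ => (hd n).1
      rw [this, hsum]; linear_combination c * hprod
    have hs2 : (∑ n, x2 n) = c * (1 - β) * ((M:ℝ) + 1) := by
      have : (∑ n, x2 n) = (∑ n, x n) * (1 - β) := by
        rw [Finset.sum_mul]; exact Finset.sum_congr rfl fun n _ => (hd n).2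
      rw [this, hsum]; linear_combination (-c) * hprod
    exact ⟨hadd, hb1, hb2, hs1, hs2⟩
  · push_neg at hE
    have hβ0' : 0 < β := lt_of_le_of_ne hβ0 (Ne.symm hE.1)
    have hβ1' : β < 1 := lt_of_le_of_ne hβ1 hE.2
    obtain ⟨hne, hdefs⟩ := hmid hβ0' hβ1'
    have hc1 : 0 ≤ c * β := mul_nonneg hc hβ0
    have hc2 : 0 ≤ c * (1 - β) := mul_nonneg hc (by linarith)
    have hx' : ∀ n, 0 ≤ x n ∧ x n ≤ c * β + c * (1 - β) := by
      intro n; refine ⟨(hx n).1, ?_⟩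
      have : c * β + c * (1 - β) = c := by ring
      rw [this]; exact (hx n).2
    have hT1 : (∑ n, mm n) ≤ c * β * (M:ℝ) := by
      have hcl := clip_sum x c (c * (1 - β)) hx hc2 M
      have e1 : max (c - c * (1 - β)) 0 = c * β := by
        rw [max_eq_left (by nlinarith)]; ring
      have e2 : (∑ n, x n) - (M:ℝ) * c - c * (1 - β) = 0 := by rw [hsum]; ring
      have e3 : (∑ n, mm n) = ∑ n, max (x n - c * (1 - β)) 0 :=
        Finset.sum_congr rfl fun n _ => hmm n
      rw [e3]
      calc (∑ n, max (x n - c * (1 - β)) 0) ≤ _ := hcl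
        _ = c * β * (M:ℝ) := by rw [e1, e2]; simp; ring
    have hT2 : (∑ n, hh n) ≤ (∑ n, x n) - c * β * (M:ℝ) := by
      have hcl := clip_sum x c (c * β) hx hc1 (M + 1)
      have e1 : max (c - c * β) 0 = c * (1 - β) := by
        rw [max_eq_left (by nlinarith)]; ring
      have e2 : max ((∑ n, x n) - ((M+1 : ℕ):ℝ) * c - c * β) 0 = 0 := by
        rw [max_eq_right]; push_cast; rw [hsum]; nlinarith
      have e3 : (∑ n, hh n) = ∑ n, max (x n - c * β) 0 :=
        Finset.sum_congr rfl fun n _ => hhh n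
      rw [e3, hsum]
      calc (∑ n, max (x n - c * β) 0) ≤ _ := hcl
        _ ≤ c * (M + 1 - β) - c * β * (M:ℝ) := by rw [e1, e2]; push_cast; nlinarith
    obtain ⟨hb1, hb2, hs1, hs2⟩ := split_core x mm hh x1 x2 (c * β) (c * (1 - β))
      (c * β * (M:ℝ)) γ' hc1 hc2 hx' hmm hhh hne hγ' hT1 hT2
      (fun n => (hdefs n).1) (fun n => (hdefs n).2)
    refine ⟨fun n => by rw [(hdefs n).2]; ring, hb1, hb2, hs1, ?_⟩
    rw [hs2, hsum]; ring


set_option maxHeartbeats 2000000 in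
/-- Lemma 2 of the paper: the per-database storage allocations
`μ̂₁(n), μ̂₂(n), μ̄₁(n), μ̄₂(n)` devoted to the `(⌊k⌋,⌊r⌋)`, `(⌊k⌋,⌈r⌉)`,
`(⌈k⌉,⌊r⌋)`, `(⌈k⌉,⌈r⌉)` MDS codes add up to `μ(n)`, respect the
per-database caps, and have the prescribed global totals. -/
theorem pruw_lemma2_storage_allocation
    (N : ℕ) (hN : 1 ≤ N) (μ : Fin N → ℝ)
    (μbar : ℝ) (hμ : ∀ n, 0 ≤ μ n ∧ μ n ≤ μbar)
    (hμbar : IsGreatest (Set.range μ) μbar)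
    (k p r : ℝ) (hk : k = 1 / μbar) (hk1 : 1 < k)
    (hknotint : ∀ z : ℤ, k ≠ (z : ℝ))
    (hp : p = ∑ n, μ n) (hr : r = k * p) (hrnotint : ∀ z : ℤ, r ≠ (z : ℝ))
    (α β δ : ℝ)
    (hαlb : (⌊k⌋ : ℝ) * ((⌈k⌉ : ℝ) - k) / k ≤ α) (hαub : α < 1)
    (hβ0 : 0 ≤ β) (hβ1 : β ≤ 1) (hδ0 : 0 ≤ δ) (hδ1 : δ ≤ 1)
    (hβlb : β ≥ max (1 - ((⌊k⌋ : ℝ) / (k * α)) * (r - (⌊r⌋ : ℝ))) 0)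
    (hδlb : δ ≥ max (1 - ((⌈k⌉ : ℝ) / (k * (1 - α))) * (r - (⌊r⌋ : ℝ))) 0)
    (hbalance : α * ((⌈r⌉ : ℝ) - β) / (⌊k⌋ : ℝ) +
      (1 - α) * ((⌈r⌉ : ℝ) - δ) / (⌈k⌉ : ℝ) = p)
    -- first-level split
    (m h : Fin N → ℝ)
    (hm : ∀ n, m n = max (μ n - (1 - α) / (⌈k⌉ : ℝ)) 0)
    (hh : ∀ n, h n = max (μ n - α / (⌊k⌋ : ℝ)) 0)
    (hden : p - (∑ n, m n) - (∑ n, h n) ≠ 0)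
    (γ : ℝ)
    (hγ : γ = ((α / (⌊k⌋ : ℝ)) * ((⌈r⌉ : ℝ) - β) - ∑ n, m n) /
      (p - (∑ n, m n) - (∑ n, h n)))
    (μhat μbarv : Fin N → ℝ)
    (hμhat : ∀ n, μhat n = m n + (μ n - m n - h n) * γ)
    (hμbarv : ∀ n, μbarv n = h n + (μ n - m n - h n) * (1 - γ))
    -- second-level split of μhat according to β
    (mhat hhat : Fin N → ℝ)
    (hmhat : ∀ n, mhat n = max (μhat n - α * (1 - β) / (⌊k⌋ : ℝ)) 0)
    (hhhat : ∀ n, hhat n = max (μhat n - α * β / (⌊k⌋ : ℝ)) 0)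
    (γhat : ℝ)
    (hγhat : γhat = ((α * β / (⌊k⌋ : ℝ)) * (⌊r⌋ : ℝ) - ∑ n, mhat n) /
      ((α / (⌊k⌋ : ℝ)) * ((⌈r⌉ : ℝ) - β) - (∑ n, mhat n) - ∑ n, hhat n))
    (μhat₁ μhat₂ : Fin N → ℝ)
    (hβmid : 0 < β → β < 1 →
      ((α / (⌊k⌋ : ℝ)) * ((⌈r⌉ : ℝ) - β) - (∑ n, mhat n) - (∑ n, hhat n) ≠ 0 ∧
        ∀ n, μhat₁ n = mhat n + (μhat n - mhat n - hhat n) * γhat ∧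
          μhat₂ n = μhat n - μhat₁ n))
    (hβend : (β = 0 ∨ β = 1) →
      ∀ n, μhat₁ n = μhat n * β ∧ μhat₂ n = μhat n * (1 - β))
    -- second-level split of μbarv according to δ
    (mbar hbar : Fin N → ℝ)
    (hmbar : ∀ n, mbar n = max (μbarv n - (1 - α) * (1 - δ) / (⌈k⌉ : ℝ)) 0)
    (hhbar : ∀ n, hbar n = max (μbarv n - (1 - α) * δ / (⌈k⌉ : ℝ)) 0)
    (γbar : ℝ)
    (hγbar : γbar = (((1 - α) * δ / (⌈k⌉ : ℝ)) * (⌊r⌋ : ℝ) - ∑ n, mbar n) /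
      (((1 - α) / (⌈k⌉ : ℝ)) * ((⌈r⌉ : ℝ) - δ) - (∑ n, mbar n) - ∑ n, hbar n))
    (μbar₁ μbar₂ : Fin N → ℝ)
    (hδmid : 0 < δ → δ < 1 →
      (((1 - α) / (⌈k⌉ : ℝ)) * ((⌈r⌉ : ℝ) - δ) - (∑ n, mbar n) - (∑ n, hbar n) ≠ 0 ∧
        ∀ n, μbar₁ n = mbar n + (μbarv n - mbar n - hbar n) * γbar ∧
          μbar₂ n = μbarv n - μbar₁ n))
    (hδend : (δ = 0 ∨ δ = 1) →
      ∀ n, μbar₁ n = μbarv n * δ ∧ μbar₂ n = μbarv n * (1 - δ)) :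
    (∀ n, μhat₁ n + μhat₂ n + μbar₁ n + μbar₂ n = μ n) ∧
    (∀ n, 0 ≤ μhat₁ n ∧ μhat₁ n ≤ α * β / (⌊k⌋ : ℝ)) ∧
    (∀ n, 0 ≤ μhat₂ n ∧ μhat₂ n ≤ α * (1 - β) / (⌊k⌋ : ℝ)) ∧
    (∀ n, 0 ≤ μbar₁ n ∧ μbar₁ n ≤ (1 - α) * δ / (⌈k⌉ : ℝ)) ∧
    (∀ n, 0 ≤ μbar₂ n ∧ μbar₂ n ≤ (1 - α) * (1 - δ) / (⌈k⌉ : ℝ)) ∧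
    (∑ n, μhat₁ n) = α * β * (⌊r⌋ : ℝ) / (⌊k⌋ : ℝ) ∧
    (∑ n, μhat₂ n) = α * (1 - β) * (⌈r⌉ : ℝ) / (⌊k⌋ : ℝ) ∧
    (∑ n, μbar₁ n) = (1 - α) * δ * (⌊r⌋ : ℝ) / (⌈k⌉ : ℝ) ∧
    (∑ n, μbar₂ n) = (1 - α) * (1 - δ) * (⌈r⌉ : ℝ) / (⌈k⌉ : ℝ) := by
  classical
  -- basic positivity facts
  obtain ⟨n₀, hn₀⟩ := hμbar.1
  have hk0 : (0:ℝ) < k := lt_trans one_pos hk1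
  have hμbar0 : 0 < μbar := by
    by_contra hcon
    push_neg at hcon
    have : k ≤ 0 := by rw [hk]; exact one_div_nonpos.mpr hcon
    linarith
  have hμbarinv : μbar = 1 / k := by rw [hk, one_div_one_div]
  have hp_pos : 0 < p := by
    rw [hp]
    refine lt_of_lt_of_le hμbar0 ?_
    rw [← hn₀]
    exact Finset.single_le_sum (fun n _ => (hμ n).1) (Finset.mem_univ n₀)
  have hr0 : 0 < r := by rw [hr]; exact mul_pos hk0 hp_pos
  -- floors and ceilings
  have hkfloor_lt : ((⌊k⌋ : ℤ) : ℝ) < k :=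
    lt_of_le_of_ne (Int.floor_le k) (fun hcon => hknotint ⌊k⌋ hcon.symm)
  have hkceil : (⌈k⌉ : ℤ) = ⌊k⌋ + 1 := by
    have h1 : (⌈k⌉ : ℤ) ≤ ⌊k⌋ + 1 := by
      apply Int.ceil_le.mpr
      push_cast
      exact (Int.lt_floor_add_one k).le
    have h2 : ⌊k⌋ + 1 ≤ ⌈k⌉ := by
      have hlt : ((⌊k⌋:ℤ):ℝ) < ((⌈k⌉:ℤ):ℝ) := lt_of_lt_of_le hkfloor_lt (Int.le_ceil k)
      have : ⌊k⌋ < ⌈k⌉ := by exact_mod_cast hlt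
      omega
    omega
  have hrfloor_lt : ((⌊r⌋ : ℤ) : ℝ) < r :=
    lt_of_le_of_ne (Int.floor_le r) (fun hcon => hrnotint ⌊r⌋ hcon.symm)
  have hrceil : (⌈r⌉ : ℤ) = ⌊r⌋ + 1 := by
    have h1 : (⌈r⌉ : ℤ) ≤ ⌊r⌋ + 1 := by
      apply Int.ceil_le.mpr
      push_cast
      exact (Int.lt_floor_add_one r).le
    have h2 : ⌊r⌋ + 1 ≤ ⌈r⌉ := by
      have hlt : ((⌊r⌋:ℤ):ℝ) < ((⌈r⌉:ℤ):ℝ) := lt_of_lt_of_le hrfloor_lt (Int.le_ceil r)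
      have : ⌊r⌋ < ⌈r⌉ := by exact_mod_cast hlt
      omega
    omega
  have hceilR : ((⌈k⌉ : ℤ) : ℝ) = ((⌊k⌋ : ℤ) : ℝ) + 1 := by rw [hkceil]; push_cast; ring
  have hrceilR : ((⌈r⌉ : ℤ) : ℝ) = ((⌊r⌋ : ℤ) : ℝ) + 1 := by rw [hrceil]; push_cast; ring
  simp only [hceilR, hrceilR] at hαlb hδlb hbalance hm hγ hγhat hβmid hmbar hhbar hγbar hδmid ⊢
  set K : ℝ := ((⌊k⌋ : ℤ) : ℝ) with hKdef
  set R : ℝ := ((⌊r⌋ : ℤ) : ℝ) with hRdef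
  have hK1 : (1:ℝ) ≤ K := by
    rw [hKdef]
    have : (1:ℤ) ≤ ⌊k⌋ := Int.le_floor.mpr (by exact_mod_cast hk1.le)
    exact_mod_cast this
  have hKpos : (0:ℝ) < K := lt_of_lt_of_le one_pos hK1
  have hK1pos : (0:ℝ) < K + 1 := by linarith
  have hkK : K < k := hkfloor_lt
  have hkK1 : k < K + 1 := by rw [hKdef]; exact_mod_cast Int.lt_floor_add_one k
  have hR0 : (0:ℝ) ≤ R := by
    rw [hRdef]
    exact_mod_cast Int.floor_nonneg.mpr hr0.le
  have hRr : R < r := hrfloor_lt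
  have hrR1 : r < R + 1 := by rw [hRdef]; exact_mod_cast Int.lt_floor_add_one r
  set M : ℕ := ⌊r⌋.toNat with hMdef
  have hM : ((M : ℕ) : ℝ) = R := by
    rw [hMdef, hRdef]
    exact_mod_cast Int.toNat_of_nonneg (Int.floor_nonneg.mpr hr0.le)
  have hα0 : 0 < α := by
    refine lt_of_lt_of_le ?_ hαlb
    apply div_pos (mul_pos hKpos (by linarith)) hk0
  have h1α : 0 < 1 - α := by linarith
  have hpinv : p = r * (1 / k) := by rw [hr]; field_simp
  -- the per-database caps
  have hμub : ∀ n, μ n ≤ 1 / k := fun n => hμbarinv ▸ (hμ n).2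
  have hcap : 1 / k ≤ α / K + (1 - α) / (K + 1) := by
    have h' : K * (K + 1 - k) ≤ α * k := by
      rw [div_le_iff₀ hk0] at hαlb
      linarith
    rw [div_add_div _ _ (ne_of_gt hKpos) (ne_of_gt hK1pos),
      div_le_div_iff₀ hk0 (mul_pos hKpos hK1pos)]
    nlinarith
  have hx1 : ∀ n, 0 ≤ μ n ∧ μ n ≤ α / K + (1 - α) / (K + 1) :=
    fun n => ⟨(hμ n).1, le_trans (hμub n) hcap⟩
  have hxk : ∀ n, 0 ≤ μ n ∧ μ n ≤ 1 / k := fun n => ⟨(hμ n).1, hμub n⟩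
  -- consequences of the β and δ lower bounds
  have hβf : α * (1 - β) / K ≤ (r - R) / k := by
    have h0 : 1 - β ≤ K / (k * α) * (r - R) := by
      have := le_trans (le_max_left (1 - K / (k * α) * (r - R)) 0) hβlb
      linarith
    rw [div_mul_eq_mul_div, le_div_iff₀ (mul_pos hk0 hα0)] at h0
    rw [div_le_div_iff₀ hKpos hk0]
    nlinarith
  have hδf : (1 - α) * (1 - δ) / (K + 1) ≤ (r - R) / k := by
    have h0 : 1 - δ ≤ (K + 1) / (k * (1 - α)) * (r - R) := by
      have := le_trans (le_max_left (1 - (K + 1) / (k * (1 - α)) * (r - R)) 0) hδlb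
      linarith
    rw [div_mul_eq_mul_div, le_div_iff₀ (mul_pos hk0 h1α)] at h0
    rw [div_le_div_iff₀ hK1pos hk0]
    nlinarith
  -- first level split: totals feasibility
  rw [hp] at hden hγ
  have hT1 : (∑ n, m n) ≤ α / K * (R + 1 - β) := by
    have hclip1 := clip_sum μ (1/k) ((1 - α) / (K + 1)) hxk
      (le_of_lt (div_pos h1α hK1pos)) M
    rw [hM] at hclip1
    have hble : (1 - α) / (K + 1) ≤ 1 / k := by
      rw [div_le_div_iff₀ hK1pos hk0]
      nlinarith
    have e1 : max (1/k - (1 - α) / (K + 1)) 0 = 1/k - (1 - α) / (K + 1) :=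
      max_eq_left (by linarith)
    rw [e1, ← hp] at hclip1
    have esm : (∑ n, m n) = ∑ n, max (μ n - (1 - α) / (K + 1)) 0 :=
      Finset.sum_congr rfl fun n _ => hm n
    have hδd : 0 ≤ (1 - α) * δ / (K + 1) :=
      div_nonneg (mul_nonneg h1α.le hδ0) hK1pos.le
    have hmax1 : max (p - R * (1/k) - (1 - α) / (K + 1)) 0 ≤
        (r - R) * (1/k) - (1 - α) * (1 - δ) / (K + 1) := by
      apply max_le
      · have key : ((r - R) * (1/k) - (1 - α) * (1 - δ) / (K + 1)) -
            (p - R * (1/k) - (1 - α) / (K + 1)) = (1 - α) * δ / (K + 1) := by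
          linear_combination -hpinv
        linarith
      · have key : (r - R) * (1/k) = (r - R) / k := by ring
        linarith [hδf]
    rw [esm]
    have key1 : R * (1/k - (1 - α) / (K + 1)) +
        ((r - R) * (1/k) - (1 - α) * (1 - δ) / (K + 1)) = α / K * (R + 1 - β) := by
      linear_combination -hbalance - hpinv
    linarith [hclip1, hmax1]
  have hT2 : (∑ n, h n) ≤ (∑ n, μ n) - α / K * (R + 1 - β) := by
    have hashape : (0:ℝ) ≤ α / K := le_of_lt (div_pos hα0 hKpos)
    have hclip2 := clip_sum μ (1/k) (α / K) hxk hashape M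
    rw [hM, ← hp] at hclip2
    have esh : (∑ n, h n) = ∑ n, max (μ n - α / K) 0 :=
      Finset.sum_congr rfl fun n _ => hh n
    rw [← hp, esh]
    rcases le_or_gt (α / K) (1/k) with hak | hak
    · have e1 : max (1/k - α / K) 0 = 1/k - α / K := max_eq_left (by linarith)
      rw [e1] at hclip2
      have hmax2 : max (p - R * (1/k) - α / K) 0 ≤
          (r - R) * (1/k) - α * (1 - β) / K := by
        apply max_le
        · have hβd : 0 ≤ α * β / K := div_nonneg (mul_nonneg hα0.le hβ0) hKpos.le
          have key : ((r - R) * (1/k) - α * (1 - β) / K) -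
              (p - R * (1/k) - α / K) = α * β / K := by
            linear_combination -hpinv
          linarith
        · have key : (r - R) * (1/k) = (r - R) / k := by ring
          linarith [hβf]
      have key2 : R * (1/k - α / K) + ((r - R) * (1/k) - α * (1 - β) / K) =
          p - α / K * (R + 1 - β) := by
        linear_combination -hpinv
      linarith [hclip2, hmax2]
    · have e1 : max (1/k - α / K) 0 = 0 := max_eq_right (by linarith)
      have e2 : max (p - R * (1/k) - α / K) 0 = 0 := by
        apply max_eq_right
        have h1 : (r - R) * (1/k) ≤ 1 * (1/k) :=
          mul_le_mul_of_nonneg_right (by linarith) (by positivity)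
        have key : p - R * (1/k) - α / K = (r - R) * (1/k) - α / K := by
          linear_combination hpinv
        linarith
      rw [e1, e2] at hclip2
      simp only [mul_zero, add_zero] at hclip2
      have hnn : 0 ≤ (1 - α) * (R + 1 - δ) / (K + 1) :=
        div_nonneg (mul_nonneg h1α.le (by linarith)) hK1pos.le
      have key : p - α / K * (R + 1 - β) = (1 - α) * (R + 1 - δ) / (K + 1) := by
        linear_combination -hbalance
      linarith [hclip2]
  -- the first level split
  have hμbarv' : ∀ n, μbarv n = μ n - μhat n := by
    intro n; rw [hμbarv n, hμhat n]; ring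
  obtain ⟨hy1, hz1, hsy, hszz⟩ := split_core μ m h μhat μbarv (α / K)
    ((1 - α) / (K + 1)) (α / K * (R + 1 - β)) γ
    (le_of_lt (div_pos hα0 hKpos)) (le_of_lt (div_pos h1α hK1pos))
    hx1 hm hh hden hγ hT1 hT2 hμhat hμbarv'
  have hsz' : (∑ n, μbarv n) = (1 - α) / (K + 1) * (R + 1 - δ) := by
    rw [hszz, ← hp]
    linear_combination -hbalance
  -- second level: β side
  have hsumβ : (∑ n, μhat n) = α / K * (((M:ℕ):ℝ) + 1 - β) := by rw [hM]; exact hsy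
  have hmmβ : ∀ n, mhat n = max (μhat n - α / K * (1 - β)) 0 := by
    intro n; rw [hmhat n]; congr 1; ring
  have hhhβ : ∀ n, hhat n = max (μhat n - α / K * β) 0 := by
    intro n; rw [hhhat n]; congr 1; ring
  have hγ'β : γhat = (α / K * β * ((M:ℕ):ℝ) - ∑ n, mhat n) /
      ((∑ n, μhat n) - (∑ n, mhat n) - ∑ n, hhat n) := by
    rw [hγhat, hsy, hM]; ring
  have hmidβ : 0 < β → β < 1 →
      ((∑ n, μhat n) - (∑ n, mhat n) - (∑ n, hhat n) ≠ 0 ∧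
        ∀ n, μhat₁ n = mhat n + (μhat n - mhat n - hhat n) * γhat ∧
          μhat₂ n = μhat n - μhat₁ n) := by
    intro hb hb'
    obtain ⟨h1, h2⟩ := hβmid hb hb'
    exact ⟨by rw [hsy]; exact h1, h2⟩
  obtain ⟨haddβ, hb1β, hb2β, hs1β, hs2β⟩ := level2 μhat μhat₁ μhat₂ mhat hhat
    (α / K) β γhat M (le_of_lt (div_pos hα0 hKpos)) hβ0 hβ1 hy1 hsumβ hmmβ hhhβ
    hγ'β hmidβ hβend
  -- second level: δ side
  have hsumδ : (∑ n, μbarv n) = (1 - α) / (K + 1) * (((M:ℕ):ℝ) + 1 - δ) := by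
    rw [hM]; exact hsz'
  have hmmδ : ∀ n, mbar n = max (μbarv n - (1 - α) / (K + 1) * (1 - δ)) 0 := by
    intro n; rw [hmbar n]; congr 1; ring
  have hhhδ : ∀ n, hbar n = max (μbarv n - (1 - α) / (K + 1) * δ) 0 := by
    intro n; rw [hhbar n]; congr 1; ring
  have hγ'δ : γbar = ((1 - α) / (K + 1) * δ * ((M:ℕ):ℝ) - ∑ n, mbar n) /
      ((∑ n, μbarv n) - (∑ n, mbar n) - ∑ n, hbar n) := by
    rw [hγbar, hsz', hM]; ring
  have hmidδ : 0 < δ → δ < 1 →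
      ((∑ n, μbarv n) - (∑ n, mbar n) - (∑ n, hbar n) ≠ 0 ∧
        ∀ n, μbar₁ n = mbar n + (μbarv n - mbar n - hbar n) * γbar ∧
          μbar₂ n = μbarv n - μbar₁ n) := by
    intro hb hb'
    obtain ⟨h1, h2⟩ := hδmid hb hb'
    exact ⟨by rw [hsz']; exact h1, h2⟩
  obtain ⟨haddδ, hb1δ, hb2δ, hs1δ, hs2δ⟩ := level2 μbarv μbar₁ μbar₂ mbar hbar
    ((1 - α) / (K + 1)) δ γbar M (le_of_lt (div_pos h1α hK1pos)) hδ0 hδ1 hz1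
    hsumδ hmmδ hhhδ hγ'δ hmidδ hδend
  -- assemble all conclusions
  refine ⟨?_, ?_, ?_, ?_, ?_, ?_, ?_, ?_, ?_⟩
  · intro n
    have h1 := haddβ n
    have h2 := haddδ n
    have h3 := hμbarv' n
    linarith
  · intro n
    refine ⟨(hb1β n).1, ?_⟩
    have := (hb1β n).2
    have e : α / K * β = α * β / K := by ring
    linarith
  · intro n
    refine ⟨(hb2β n).1, ?_⟩
    have := (hb2β n).2
    have e : α / K * (1 - β) = α * (1 - β) / K := by ring
    linarith
  · intro n
    refine ⟨(hb1δ n).1, ?_⟩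
    have := (hb1δ n).2
    have e : (1 - α) / (K + 1) * δ = (1 - α) * δ / (K + 1) := by ring
    linarith
  · intro n
    refine ⟨(hb2δ n).1, ?_⟩
    have := (hb2δ n).2
    have e : (1 - α) / (K + 1) * (1 - δ) = (1 - α) * (1 - δ) / (K + 1) := by ring
    linarith
  · rw [hs1β, hM]; ring
  · rw [hs2β, hM]; ring
  · rw [hs1δ, hM]; ring
  · rw [hs2δ, hM]; ring
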